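/- Let r > 0 and a0 ≥ 0 be real numbers with 2a0 + 2r < 1. Then h is injective on the closed exterior of the unit disk: if w1, w2 ∈ ℂ satisfy |w1| ≥ 1, |w2| ≥ 1 and h(w1) = h(w2), then w1 = w2. -/

import Mathlib

noncomputable section

/-- The rational function `h(w) = r w + a0 + 2 a0 r / w + r² / w²`, as a function of a
complex variable (with real parameters `r`, `a0`). -/
def h (r a0 : ℝ) (w : ℂ) : ℂ :=
  (r:ℂ)*w + (a0:ℂ) + 2*(a0:ℂ)*(r:ℂ)/w + (r:ℂ)^2/w^2

/-- If `r > 0`, `a0 ≥ 0` and `2a0 + 2r < 1`, then `h` is injective on the closed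
exterior `{|w| ≥ 1}` of the unit disk. -/
theorem h_injective_outside_unit_disk (r a0 : ℝ) (hr : 0 < r) (ha : 0 ≤ a0)
    (hsum : 2*a0 + 2*r < 1) (w1 w2 : ℂ)
    (hw1 : 1 ≤ ‖w1‖) (hw2 : 1 ≤ ‖w2‖)
    (heq : h r a0 w1 = h r a0 w2) :
    w1 = w2 := by
  have h1 : w1 ≠ 0 := by
    intro h; rw [h] at hw1; simp at hw1; linarith
  have h2 : w2 ≠ 0 := by
    intro h; rw [h] at hw2; simp at hw2; linarith
  set a := ‖w1‖ with haa
  set b := ‖w2‖ with hbb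
  have ha0 : (0:ℝ) < a := lt_of_lt_of_le one_pos hw1
  have hb0 : (0:ℝ) < b := lt_of_lt_of_le one_pos hw2
  set X : ℂ := 2*(a0:ℂ)*(r:ℂ)/(w1*w2) with hX
  set Y : ℂ := (r:ℂ)^2*(w1+w2)/(w1^2*w2^2) with hY
  set D : ℂ := (r:ℂ) - X - Y with hD
  have key : (w1 - w2) * D = 0 := by
    have e : (w1 - w2) * D = h r a0 w1 - h r a0 w2 := by
      rw [hD, hX, hY]; simp only [h]; field_simp; ring
    rw [e, heq, sub_self]
  have habsX : ‖X‖ ≤ 2*a0*r := by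
    rw [hX]
    rw [norm_div, norm_mul, norm_mul, norm_mul]
    simp only [Complex.norm_real, Real.norm_eq_abs, Complex.norm_two, abs_of_nonneg ha, abs_of_nonneg hr.le]
    rw [← haa, ← hbb, div_le_iff₀ (by positivity)]
    have hab : 1 ≤ a*b := by nlinarith
    nlinarith [mul_nonneg ha hr.le, hab]
  have habsY : ‖Y‖ ≤ 2*r^2 := by
    rw [hY]
    simp only [norm_div, norm_mul, norm_pow, Complex.norm_real, Real.norm_eq_abs, abs_of_nonneg hr.le]
    rw [← haa, ← hbb, div_le_iff₀ (by positivity)]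
    have htri : ‖w1 + w2‖ ≤ a + b := norm_add_le w1 w2
    have e1 : 1 ≤ a*b^2 := by nlinarith
    have e2 : 1 ≤ a^2*b := by nlinarith
    have h3 : a + b ≤ 2*(a^2*b^2) := by nlinarith
    nlinarith [mul_le_mul_of_nonneg_left htri (sq_nonneg r),
      mul_le_mul_of_nonneg_left h3 (sq_nonneg r)]
  have hDne : D ≠ 0 := by
    intro h0
    have hr' : (r:ℂ) = X + Y := by
      rw [hD] at h0; linear_combination h0
    have : r ≤ 2*a0*r + 2*r^2 := by
      calc r = ‖(r:ℂ)‖ := by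
              rw [Complex.norm_real, Real.norm_eq_abs, abs_of_nonneg hr.le]
        _ = ‖X + Y‖ := by rw [hr']
        _ ≤ ‖X‖ + ‖Y‖ := norm_add_le X Y
        _ ≤ 2*a0*r + 2*r^2 := add_le_add habsX habsY
    nlinarith
  have := mul_eq_zero.mp key
  rcases this with h | h
  · exact sub_eq_zero.mp h
  · exact absurd h hDne
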